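/- Truth of positive Σ2 sentences over A* reduces to triviality: a sentence ∃x_1,...,x_n ∀y_1,...,y_m. E_1 ∨ E_2 ∨ ... ∨ E_t, where each E_i is a single positive word equation over variables x_1,...,x_n,y_1,...,y_m and constants from A (|A| ≥ 2), holds in A* if and only if there exists an assignment of words to x_1,...,x_n under which at least one E_i becomes a trivial equation (both sides identical as words over {y_1,...,y_m} ∪ A). -/
import Mathlib


/-- Substitution on patterns: constants are fixed, variables are replaced by `σ`. -/
def wsubst {A V : Type} (σ : V → List A) (w : List (A ⊕ V)) : List A :=
  w.flatMap (Sum.elim (fun c => [c]) σ)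

/-- Partial substitution: replace the existential variables `x_i` by the words `σx i`,
leaving the constants and the universal variables `y_j` untouched; the result is a
pattern over the variables `y_1, …, y_m`. -/
def psubst {A : Type} {n m : ℕ} (σx : Fin n → List A) (w : List (A ⊕ (Fin n ⊕ Fin m))) :
    List (A ⊕ Fin m) :=
  w.flatMap (fun s =>
    match s with
    | Sum.inl c => [Sum.inl c]
    | Sum.inr (Sum.inl i) => (σx i).map Sum.inl
    | Sum.inr (Sum.inr j) => [Sum.inr j])

@[simp] lemma wsubst_nil {A V : Type} (σ : V → List A) : wsubst σ ([] : List (A ⊕ V)) = [] := rfl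

@[simp] lemma wsubst_cons {A V : Type} (σ : V → List A) (s : A ⊕ V) (w : List (A ⊕ V)) :
    wsubst σ (s :: w) = Sum.elim (fun c => [c]) σ s ++ wsubst σ w := by
  simp [wsubst]

/-- Composition of the partial substitution with a `y`-substitution. -/
lemma flatMap_map_inl {A : Type} {m : ℕ} (σy : Fin m → List A) (l : List A) :
    (l.map Sum.inl).flatMap (Sum.elim (fun c => [c]) (σy : Fin m → List A)) = l := by
  induction l with
  | nil => rfl
  | cons c l ih => simpa using ih

lemma wsubst_psubst {A : Type} {n m : ℕ} (σx : Fin n → List A) (σy : Fin m → List A)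
    (w : List (A ⊕ (Fin n ⊕ Fin m))) :
    wsubst σy (psubst σx w) = wsubst (Sum.elim σx σy) w := by
  induction w with
  | nil => rfl
  | cons s w ih =>
    rcases s with c | (i | j)
    · simpa [psubst, wsubst] using congrArg (fun l => c :: l) ih
    · simp only [psubst, List.flatMap_cons, wsubst, List.flatMap_append] at *
      rw [ih, flatMap_map_inl]
      rfl
    · simpa [psubst, wsubst] using congrArg (fun l => σy j ++ l) ih

/-- The test substitution. -/
def testσ {A : Type} {m : ℕ} (a b : A) (N : ℕ) (j : Fin m) : List A :=
  a :: (List.replicate (N + (j : ℕ) + 1) b ++ [a])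

lemma repl_cancel {α : Type} {a b : α} (hab : a ≠ b) :
    ∀ (p q : ℕ) (X Y : List α),
      List.replicate p b ++ a :: X = List.replicate q b ++ a :: Y → p = q ∧ X = Y := by
  intro p
  induction p with
  | zero =>
    intro q X Y h
    cases q with
    | zero => simpa using h
    | succ q => simp [List.replicate_succ] at h; exact absurd h.1 hab
  | succ p ih =>
    intro q X Y h
    cases q with
    | zero => simp [List.replicate_succ] at h; exact absurd h.1.symm hab
    | succ q =>
      simp only [List.replicate_succ, List.cons_append, List.cons.injEq] at h
      obtain ⟨rfl, h2⟩ := ih q X Y h.2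
      exact ⟨rfl, h2⟩

lemma bprefix {A : Type} {m : ℕ} {a b : A} (hab : a ≠ b) (N : ℕ) :
    ∀ (W : List (A ⊕ Fin m)) (K : ℕ) (Y : List A),
      wsubst (testσ a b N) W = List.replicate K b ++ Y → K ≤ W.length := by
  intro W
  induction W with
  | nil =>
    intro K Y h
    cases K with
    | zero => simp
    | succ K => simp [List.replicate_succ] at h
  | cons s W ih =>
    intro K Y h
    cases K with
    | zero => simp
    | succ K =>
      rcases s with c | j
      · simp only [wsubst_cons, Sum.elim_inl, List.singleton_append,
          List.replicate_succ, List.cons_append, List.cons.injEq] at h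
        have := ih K Y h.2
        simpa using Nat.succ_le_succ this
      · simp only [wsubst_cons, Sum.elim_inr, testσ, List.cons_append,
          List.replicate_succ, List.cons.injEq] at h
        exact absurd h.1 hab

lemma wsubst_eq_nil {A : Type} {m : ℕ} {a b : A} {N : ℕ} {W : List (A ⊕ Fin m)}
    (h : wsubst (testσ a b N) W = []) : W = [] := by
  cases W with
  | nil => rfl
  | cons s W =>
    rcases s with c | j <;> simp [testσ] at h

lemma test_inj {A : Type} {m : ℕ} {a b : A} (hab : a ≠ b) (N : ℕ) :
    ∀ (U V : List (A ⊕ Fin m)), U.length ≤ N → V.length ≤ N →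
      wsubst (testσ a b N) U = wsubst (testσ a b N) V → U = V := by
  intro U
  induction U with
  | nil =>
    intro V _ _ h
    exact (wsubst_eq_nil h.symm).symm
  | cons s U ih =>
    intro V hU hV h
    cases V with
    | nil =>
      exact absurd (wsubst_eq_nil h) (by simp)
    | cons s' V =>
      rcases s with c | j <;> rcases s' with c' | k
      · simp only [wsubst_cons, Sum.elim_inl, List.singleton_append,
          List.cons.injEq] at h
        obtain ⟨rfl, h2⟩ := h
        have := ih V (by simpa using Nat.le_of_succ_le hU)
          (by simpa using Nat.le_of_succ_le hV) h2
        rw [this]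
      · -- constant vs variable: impossible
        exfalso
        simp only [wsubst_cons, Sum.elim_inl, Sum.elim_inr, testσ,
          List.singleton_append, List.cons_append, List.cons.injEq,
          List.append_assoc, List.singleton_append] at h
        have h2 := h.2
        have hle := bprefix hab N U (N + (k : ℕ) + 1) (a :: wsubst (testσ a b N) V) h2
        simp only [List.length_cons] at hU
        omega
      · exfalso
        simp only [wsubst_cons, Sum.elim_inl, Sum.elim_inr, testσ,
          List.singleton_append, List.cons_append, List.cons.injEq,
          List.append_assoc, List.singleton_append] at h
        have h2 := h.2.symm
        have hle := bprefix hab N V (N + (j : ℕ) + 1) (a :: wsubst (testσ a b N) U) h2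
        simp only [List.length_cons] at hV
        omega
      · simp only [wsubst_cons, Sum.elim_inr, testσ, List.cons_append,
          List.cons.injEq, List.append_assoc, List.singleton_append] at h
        obtain ⟨hjk, hrest⟩ := repl_cancel hab _ _ _ _ h.2
        have hjk' : j = k := Fin.ext (by omega)
        subst hjk'
        have := ih V (by simpa using Nat.le_of_succ_le hU)
          (by simpa using Nat.le_of_succ_le hV) hrest
        rw [this]

/-- A positive `Σ₂` sentence `∃x₁…xₙ ∀y₁…y_m. E₁ ∨ … ∨ E_t` (each `E_i` a positive word
equation) holds in `A*` (`|A| ≥ 2`) iff some assignment of the `x`'s makes at least one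
`E_i` a trivial equation (both sides syntactically identical as patterns over the `y`'s). -/
theorem stmt17 (A : Type) [Fintype A] (h2 : 2 ≤ Fintype.card A) (n m t : ℕ)
    (E : Fin t → List (A ⊕ (Fin n ⊕ Fin m)) × List (A ⊕ (Fin n ⊕ Fin m))) :
    (∃ σx : Fin n → List A, ∀ σy : Fin m → List A,
        ∃ i : Fin t, wsubst (Sum.elim σx σy) (E i).1 = wsubst (Sum.elim σx σy) (E i).2) ↔
      (∃ σx : Fin n → List A, ∃ i : Fin t, psubst σx (E i).1 = psubst σx (E i).2) := by
  constructor
  · rintro ⟨σx, hσx⟩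
    refine ⟨σx, ?_⟩
    obtain ⟨a, b, hab⟩ := Fintype.exists_pair_of_one_lt_card (α := A) (by omega)
    set N : ℕ := Finset.univ.sup (fun i : Fin t =>
      max (psubst σx (E i).1).length (psubst σx (E i).2).length) with hN
    obtain ⟨i, hi⟩ := hσx (testσ a b N)
    refine ⟨i, ?_⟩
    have h1 := wsubst_psubst σx (testσ a b N) (E i).1
    have h2' := wsubst_psubst σx (testσ a b N) (E i).2
    have hlen : max (psubst σx (E i).1).length (psubst σx (E i).2).length ≤ N :=
      Finset.le_sup (f := fun i : Fin t =>
        max (psubst σx (E i).1).length (psubst σx (E i).2).length) (Finset.mem_univ i)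
    exact test_inj hab N _ _ (le_trans (le_max_left _ _) hlen)
      (le_trans (le_max_right _ _) hlen) (by rw [h1, h2', hi])
  · rintro ⟨σx, i, hi⟩
    refine ⟨σx, fun σy => ⟨i, ?_⟩⟩
    rw [← wsubst_psubst σx σy, ← wsubst_psubst σx σy, hi]
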